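/- Injectivity of the transformation in the angle (injection part of Theorem 1): let T > 0 and let f : AddCircle T → ℂ be integrable with c₁(f) ≠ 0. If φₐ, φ_b : ℝ satisfy 𝒯(f, φₐ)(x) = 𝒯(f, φ_b)(x) for all x : AddCircle T, then ↑φₐ = ↑φ_b in Real.Angle; i.e., distinct angles modulo 2π produce distinct transformed signals. -/

import Mathlib

open MeasureTheory

/-- `theta T f φ` is the representative in `[0, 2π)` of `arg (c₁ f) − φ` modulo `2π`. -/
noncomputable def theta (T : ℝ) [Fact (0 < T)] (f : AddCircle T → ℂ) (φ : ℝ) : ℝ :=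
  toIcoMod Real.two_pi_pos 0 (Complex.arg (fourierCoeff f 1) - φ)

/-- The computed time-shift amount `Δφ(f, φ)`. -/
noncomputable def deltaPhi (T : ℝ) [Fact (0 < T)] (f : AddCircle T → ℂ) (φ : ℝ) : ℝ :=
  if theta T f φ > Real.pi then (theta T f φ - 2 * Real.pi) * T / (2 * Real.pi)
  else theta T f φ * T / (2 * Real.pi)

/-- The transformation `𝒯(f, φ)`: circularly shift `f` by `Δφ(f, φ)`. -/
noncomputable def transf (T : ℝ) [Fact (0 < T)] (f : AddCircle T → ℂ) (φ : ℝ) :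
    AddCircle T → ℂ :=
  fun x => f (x - (deltaPhi T f φ : AddCircle T))

lemma fourierCoeff_shift {T : ℝ} [hT : Fact (0 < T)] (f : AddCircle T → ℂ) (n : ℤ) (s : ℝ) :
    fourierCoeff (fun x => f (x - (s : AddCircle T))) n
      = fourier (-n) (s : AddCircle T) * fourierCoeff f n := by
  unfold fourierCoeff
  rw [← MeasureTheory.integral_add_right_eq_self
    (μ := AddCircle.haarAddCircle)
    (fun t : AddCircle T => fourier (-n) t • f (t - (s : AddCircle T))) ((s : AddCircle T))]
  simp only [add_sub_cancel_right, smul_eq_mul]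
  rw [← integral_const_mul]
  congr 1
  ext t
  rw [fourier_apply, fourier_apply, fourier_apply, smul_add, AddCircle.toCircle_add]
  push_cast
  ring

lemma theta_mem {T : ℝ} [Fact (0 < T)] (f : AddCircle T → ℂ) (φ : ℝ) :
    theta T f φ ∈ Set.Ico (0 : ℝ) (2 * Real.pi) := by
  have := toIcoMod_mem_Ico Real.two_pi_pos 0 (Complex.arg (fourierCoeff f 1) - φ)
  simpa [theta] using this

lemma deltaPhi_mem {T : ℝ} [hT : Fact (0 < T)] (f : AddCircle T → ℂ) (φ : ℝ) :
    deltaPhi T f φ ∈ Set.Ioc (-(T / 2)) (T / 2) := by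
  have hπ := Real.pi_pos
  have hT0 := hT.out
  obtain ⟨h0, h2⟩ := theta_mem f φ
  unfold deltaPhi
  split_ifs with hgt
  · constructor
    · rw [neg_lt, ← neg_div]
      rw [div_lt_iff₀ (by positivity)]
      nlinarith
    · rw [div_le_iff₀ (by positivity)]
      nlinarith
  · push_neg at hgt
    constructor
    · rw [neg_lt, ← neg_div]
      rw [div_lt_iff₀ (by positivity)]
      nlinarith
    · rw [div_le_iff₀ (by positivity)]
      nlinarith

/-- Injectivity of the transformation in the angle: distinct angles modulo `2π` produce
distinct transformed signals. -/
theorem transf_injective_angle (T : ℝ) [Fact (0 < T)] (f : AddCircle T → ℂ)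
    (hf : Integrable f AddCircle.haarAddCircle) (hc : fourierCoeff f 1 ≠ 0)
    (φₐ φb : ℝ) (h : ∀ x : AddCircle T, transf T f φₐ x = transf T f φb x) :
    (↑φₐ : Real.Angle) = ↑φb := by
  have hT0 : (0 : ℝ) < T := Fact.out
  have hπ := Real.pi_pos
  set Δa := deltaPhi T f φₐ with hΔa
  set Δb := deltaPhi T f φb with hΔb
  -- equality of first Fourier coefficients of the shifted functions
  have hfun : (fun x : AddCircle T => f (x - (Δa : AddCircle T)))
      = fun x => f (x - (Δb : AddCircle T)) := funext h
  have hcoeff : fourier (-1) ((Δa : ℝ) : AddCircle T) * fourierCoeff f 1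
      = fourier (-1) ((Δb : ℝ) : AddCircle T) * fourierCoeff f 1 := by
    rw [← fourierCoeff_shift f 1 Δa, ← fourierCoeff_shift f 1 Δb, hfun]
  have hfe : fourier (-1) ((Δa : ℝ) : AddCircle T)
      = fourier (-1) ((Δb : ℝ) : AddCircle T) := mul_right_cancel₀ hc hcoeff
  rw [fourier_coe_apply, fourier_coe_apply] at hfe
  obtain ⟨k, hk⟩ := Complex.exp_eq_exp_iff_exists_int.mp hfe
  -- extract a real relation Δb - Δa = k * T
  have h2πI : (2 * (Real.pi : ℂ) * Complex.I) ≠ 0 := by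
    simp [Real.pi_ne_zero, Complex.I_ne_zero]
  have hk2 : (2 * (Real.pi : ℂ) * Complex.I) * (-(Δa : ℂ) / T)
      = (2 * (Real.pi : ℂ) * Complex.I) * (-(Δb : ℂ) / T + k) := by
    push_cast at hk ⊢
    linear_combination hk
  have hk3 : (-(Δa : ℂ) / T) = (-(Δb : ℂ) / T + k) := mul_left_cancel₀ h2πI hk2
  have hk4 : -Δa / T = -Δb / T + k := by exact_mod_cast hk3
  have hΔeq : Δb - Δa = k * T := by
    have h5 : (-Δa / T) * T = (-Δb / T + k) * T := by rw [hk4]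
    field_simp at h5
    have h6 : (Δb - Δa) * T = (↑k * T) * T := by linear_combination T * h5
    exact mul_right_cancel₀ (ne_of_gt hT0) h6
  -- both deltas lie in (-T/2, T/2], so k = 0
  obtain ⟨ha1, ha2⟩ := deltaPhi_mem f φₐ
  obtain ⟨hb1, hb2⟩ := deltaPhi_mem f φb
  have hk0 : k = 0 := by
    rcases lt_trichotomy k 0 with hlt | he | hgt
    · have : (k : ℝ) ≤ -1 := by exact_mod_cast Int.le_of_lt_add_one (by omega : k < -1 + 1)
      nlinarith
    · exact he
    · have : (1 : ℝ) ≤ k := by exact_mod_cast hgt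
      nlinarith
  have hΔ : Δa = Δb := by
    rw [hk0] at hΔeq; push_cast at hΔeq; linarith
  -- hence theta T f φₐ = theta T f φb
  set ta := theta T f φₐ with hta
  set tb := theta T f φb with htb
  obtain ⟨ha0, ha2'⟩ := theta_mem f φₐ
  obtain ⟨hb0, hb2'⟩ := theta_mem f φb
  have hteq : ta = tb := by
    rw [hΔa, hΔb] at hΔ
    unfold deltaPhi at hΔ
    rw [← hta, ← htb] at hΔ
    split_ifs at hΔ with h1 h2 h2
    · field_simp at hΔ
      linarith
    · push_neg at h2
      exfalso
      have hlt : (ta - 2 * Real.pi) * T / (2 * Real.pi) < 0 := by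
        apply div_neg_of_neg_of_pos _ (by positivity)
        nlinarith
      have hge : 0 ≤ tb * T / (2 * Real.pi) := by positivity
      linarith [hΔ ▸ hlt]
    · push_neg at h1
      exfalso
      have hlt : (tb - 2 * Real.pi) * T / (2 * Real.pi) < 0 := by
        apply div_neg_of_neg_of_pos _ (by positivity)
        nlinarith
      have hge : 0 ≤ ta * T / (2 * Real.pi) := by positivity
      linarith [hΔ ▸ hlt]
    · field_simp at hΔ
      linarith
  -- translate back to angles
  have : ∃ n : ℤ, (Complex.arg (fourierCoeff f 1) - φb)
      - (Complex.arg (fourierCoeff f 1) - φₐ) = n • (2 * Real.pi) := by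
    exact (toIcoMod_eq_toIcoMod Real.two_pi_pos).mp hteq
  obtain ⟨n, hn⟩ := this
  rw [Real.Angle.angle_eq_iff_two_pi_dvd_sub]
  exact ⟨n, by simp only [zsmul_eq_mul] at hn; linarith⟩
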